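/- Let p ≥ 1 and 2 ≤ q ≤ k be integers, and let G be a graph with maximum degree Δ(G) ≤ k − 1 and |V(G)| ≥ 2k(k−1) + pk. Then a spanning subgraph H of G satisfies the (pK1 + qK2)-closure if and only if H satisfies the qK2-closure. -/

import Mathlib

open SimpleGraph

/-- A spanning subgraph `H` of `G` *satisfies the `F`-closure* if for every vertex subset `S`
such that `H[S]` is isomorphic to `F`, the induced subgraph `G[S]` is not isomorphic to `F`. -/
def SatisfiesClosure {V W : Type*} (G H : SimpleGraph V) (F : SimpleGraph W) : Prop :=
  ∀ S : Set V, Nonempty ((H.induce S) ≃g F) → ¬ Nonempty ((G.induce S) ≃g F)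

/-- The graph `qK2`: the disjoint union of `q` edges. -/
def qK2graph (q : ℕ) : SimpleGraph (Fin q × Fin 2) :=
  SimpleGraph.fromRel (fun a b => a.1 = b.1)

/-- The graph `pK1 + qK2`: the disjoint union of `p` isolated vertices and `q` edges. -/
def pK1qK2 (p q : ℕ) : SimpleGraph (Fin p ⊕ Fin q × Fin 2) :=
  SimpleGraph.fromRel (fun a b => ∃ x y, a = Sum.inr x ∧ b = Sum.inr y ∧ x.1 = y.1)

/-- Let `p ≥ 1`, `2 ≤ q ≤ k`, and let `G` be a graph with maximum degree at most `k − 1` and at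
least `2k(k−1) + pk` vertices. Then a spanning subgraph `H` of `G` satisfies the
`(pK1 + qK2)`-closure iff `H` satisfies the `qK2`-closure. -/
lemma pk_adj_inr {p q : ℕ} (x y : Fin q × Fin 2) :
    (pK1qK2 p q).Adj (Sum.inr x) (Sum.inr y) ↔ (qK2graph q).Adj x y := by
  constructor
  · rintro ⟨hne, (⟨a,b,ha,hb,hab⟩|⟨a,b,ha,hb,hab⟩)⟩ <;>
    · simp only [Sum.inr.injEq] at ha hb
      subst ha hb
      exact ⟨fun h => hne (by rw [h]), by simp [hab]⟩
  · rintro ⟨hne, (h|h)⟩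
    · exact ⟨by simpa using hne, Or.inl ⟨x, y, rfl, rfl, h⟩⟩
    · exact ⟨by simpa using hne, Or.inr ⟨y, x, rfl, rfl, h⟩⟩

lemma pk_adj_inl {p q : ℕ} (a : Fin p) (b : Fin p ⊕ Fin q × Fin 2) :
    ¬ (pK1qK2 p q).Adj (Sum.inl a) b := by
  rintro ⟨hne, (⟨x,y,hx,-⟩|⟨x,y,-,hy,-⟩)⟩ <;> simp_all

lemma le_iso_eq {α β : Type*} [Finite α] [Finite β] {A B : SimpleGraph α} {F : SimpleGraph β}
    (hAB : A ≤ B) (hA : Nonempty (A ≃g F)) (hB : Nonempty (B ≃g F)) : A = B := by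
  obtain ⟨fa⟩ := hA; obtain ⟨fb⟩ := hB
  have hsub : A.edgeSet ⊆ B.edgeSet := edgeSet_mono hAB
  have h1 : B.edgeSet.ncard ≤ A.edgeSet.ncard := by
    rw [← Nat.card_coe_set_eq, ← Nat.card_coe_set_eq,
      Nat.card_congr fa.mapEdgeSet, Nat.card_congr fb.mapEdgeSet]
  have := Set.eq_of_subset_of_ncard_le hsub h1 (Set.toFinite _)
  exact edgeSet_injective this

lemma exists_indep {V : Type*} [Fintype V] [DecidableEq V] (G : SimpleGraph V)
    [DecidableRel G.Adj] (k : ℕ)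
    (hdeg : ∀ v, (G.neighborFinset v).card ≤ k - 1) (hk : 1 ≤ k) :
    ∀ (p : ℕ) (A : Finset V), p * k ≤ A.card →
    ∃ W : Finset V, W ⊆ A ∧ W.card = p ∧ (∀ x ∈ W, ∀ y ∈ W, ¬ G.Adj x y) := by
  intro p
  induction p with
  | zero => exact fun A _ => ⟨∅, by simp⟩
  | succ n ih =>
    intro A hA
    have hA0 : 0 < A.card := lt_of_lt_of_le (by positivity) hA
    obtain ⟨a, ha⟩ := Finset.card_pos.mp hA0
    have hcard' : n * k ≤ (A \ insert a (G.neighborFinset a)).card := by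
      have h2 : (insert a (G.neighborFinset a)).card ≤ k := by
        calc (insert a (G.neighborFinset a)).card ≤ (G.neighborFinset a).card + 1 :=
              Finset.card_insert_le _ _
          _ ≤ (k - 1) + 1 := Nat.add_le_add_right (hdeg a) 1
          _ = k := by omega
      have h3 := Finset.le_card_sdiff (insert a (G.neighborFinset a)) A
      have : (n + 1) * k = n * k + k := by ring
      omega
    obtain ⟨W', hW'sub, hW'card, hW'ind⟩ := ih _ hcard'
    have hmem : ∀ z ∈ W', z ∈ A ∧ z ≠ a ∧ ¬ G.Adj a z := by
      intro z hz
      have h := Finset.mem_sdiff.mp (hW'sub hz)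
      refine ⟨h.1, ?_, ?_⟩
      · intro hza; exact h.2 (by simp [hza])
      · intro hadj; exact h.2 (Finset.mem_insert_of_mem (by simpa using hadj))
    have haW' : a ∉ W' := fun h => (hmem a h).2.1 rfl
    refine ⟨insert a W', ?_, ?_, ?_⟩
    · intro x hx
      rcases Finset.mem_insert.mp hx with rfl | hx
      · exact ha
      · exact (hmem x hx).1
    · rw [Finset.card_insert_of_notMem haW', hW'card]
    · intro x hx y hy hadj
      rcases Finset.mem_insert.mp hx with hxa | hx <;>
        rcases Finset.mem_insert.mp hy with hya | hy
      · rw [hxa, hya] at hadj; exact G.irrefl hadj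
      · exact (hmem y hy).2.2 (hxa ▸ hadj)
      · exact (hmem x hx).2.2 (hya ▸ hadj.symm)
      · exact hW'ind x hx y hy hadj

theorem stmt_9 {V : Type*} [Fintype V] (G : SimpleGraph V) (p q k : ℕ)
    (hp : 1 ≤ p) (hq : 2 ≤ q) (hqk : q ≤ k)
    (hdeg : ∀ v, (G.neighborSet v).ncard ≤ k - 1)
    (hcard : 2 * k * (k - 1) + p * k ≤ Fintype.card V)
    (H : SimpleGraph V) (hH : H ≤ G) :
    SatisfiesClosure G H (pK1qK2 p q) ↔ SatisfiesClosure G H (qK2graph q) := by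
  classical
  have hindmono : ∀ (S : Set V), H.induce S ≤ G.induce S := by
    intro S a b hab
    exact hH hab
  constructor
  · -- pK1qK2-closure → qK2-closure
    intro hcl S hHS hGS
    obtain ⟨fH⟩ := hHS
    obtain ⟨fG⟩ := hGS
    have heq : H.induce S = G.induce S := le_iso_eq (hindmono S) ⟨fH⟩ ⟨fG⟩
    have hpt : ∀ u v : V, u ∈ S → v ∈ S → (G.Adj u v ↔ H.Adj u v) := by
      intro u v hu hv
      have := SimpleGraph.ext_iff.mp heq
      have h2 := congrFun (congrFun this (⟨u, hu⟩ : S)) (⟨v, hv⟩ : S)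
      constructor
      · intro h; exact (h2 ▸ (comap_adj.mpr h : (G.induce S).Adj ⟨u,hu⟩ ⟨v,hv⟩) : (H.induce S).Adj ⟨u,hu⟩ ⟨v,hv⟩)
      · intro h; exact hH h
    -- S is finite with card 2q
    haveI : Fintype ↥S := Fintype.ofFinite _
    have hScard : S.toFinset.card = q * 2 := by
      rw [Set.toFinset_card, Fintype.card_congr fH.toEquiv]
      simp [Fintype.card_prod]
    have hdegF : ∀ v, (G.neighborFinset v).card ≤ k - 1 := by
      intro v
      have := hdeg v
      rwa [Set.ncard_eq_toFinset_card', ← neighborFinset_def] at this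
    set B := S.toFinset.biUnion (fun s => G.neighborFinset s) with hB
    have hBcard : B.card ≤ q * 2 * (k - 1) := by
      calc B.card ≤ ∑ s ∈ S.toFinset, (G.neighborFinset s).card := Finset.card_biUnion_le
        _ ≤ ∑ _s ∈ S.toFinset, (k - 1) := Finset.sum_le_sum fun s _ => hdegF s
        _ = q * 2 * (k - 1) := by rw [Finset.sum_const, hScard, smul_eq_mul]
    have hSB : S.toFinset ⊆ B := by
      intro s hs
      have hsS : s ∈ S := Set.mem_toFinset.mp hs
      have hne : ∀ a : Fin 2, a ≠ a + 1 := by decide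
      have hadj : (qK2graph q).Adj (fH ⟨s, hsS⟩) ((fH ⟨s, hsS⟩).1, (fH ⟨s, hsS⟩).2 + 1) := by
        refine ⟨?_, Or.inl rfl⟩
        intro hcontra
        exact hne (fH ⟨s, hsS⟩).2 (congrArg Prod.snd hcontra)
      have hadj2 : (H.induce S).Adj ⟨s, hsS⟩
          (fH.symm ((fH ⟨s, hsS⟩).1, (fH ⟨s, hsS⟩).2 + 1)) := by
        have h := fH.symm.map_rel_iff.mpr hadj
        rwa [RelIso.symm_apply_apply] at h
      have hGadj : G.Adj (↑(fH.symm ((fH ⟨s, hsS⟩).1, (fH ⟨s, hsS⟩).2 + 1))) s :=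
        (hH (comap_adj.mp hadj2)).symm
      exact Finset.mem_biUnion.mpr ⟨_, Set.mem_toFinset.mpr
        (fH.symm ((fH ⟨s, hsS⟩).1, (fH ⟨s, hsS⟩).2 + 1)).2,
        (mem_neighborFinset _ _ _).mpr hGadj⟩
    set A := Finset.univ \ B with hA
    have hAcard : p * k ≤ A.card := by
      have h1 : A.card = Fintype.card V - B.card := by
        rw [hA, Finset.card_sdiff_of_subset (Finset.subset_univ _), Finset.card_univ]
      have h2 : q * 2 * (k - 1) ≤ 2 * k * (k - 1) := by
        have : q * 2 ≤ 2 * k := by omega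
        exact Nat.mul_le_mul_right _ this
      omega
    have hk1 : 1 ≤ k := le_trans (by omega) hqk
    obtain ⟨W, hWA, hWcard, hWind⟩ := exists_indep G k hdegF hk1 p A hAcard
    have hWB : ∀ w ∈ W, w ∉ B := fun w hw => (Finset.mem_sdiff.mp (hWA hw)).2
    have hWS : ∀ w ∈ W, w ∉ S := fun w hw hws =>
      hWB w hw (hSB (Set.mem_toFinset.mpr hws))
    have hWnS : ∀ w ∈ W, ∀ s ∈ S, ¬ G.Adj w s := by
      intro w hw s hs hadj
      exact hWB w hw (Finset.mem_biUnion.mpr ⟨s, Set.mem_toFinset.mpr hs,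
        (mem_neighborFinset _ _ _).mpr hadj.symm⟩)
    set T : Set V := S ∪ ↑W with hT
    have eW : ↥W ≃ Fin p := Fintype.equivFinOfCardEq (by rw [Fintype.card_coe, hWcard])
    set φ : Fin p ⊕ Fin q × Fin 2 → ↥T :=
      Sum.elim (fun a => ⟨↑(eW.symm a), Or.inr (eW.symm a).2⟩)
               (fun x => ⟨↑(fH.symm x), Or.inl (fH.symm x).2⟩) with hφ
    have hφW : ∀ a : Fin p, (↑(eW.symm a) : V) ∈ W := fun a => (eW.symm a).2
    have hφS : ∀ x : Fin q × Fin 2, (↑(fH.symm x) : V) ∈ S := fun x => (fH.symm x).2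
    have hbij : Function.Bijective φ := by
      constructor
      · rintro (a | x) (b | y) hab <;> simp only [hφ, Sum.elim_inl, Sum.elim_inr, Subtype.mk.injEq] at hab
        · rw [Sum.inl.injEq]
          exact eW.symm.injective (Subtype.val_injective (congrArg (Subtype.val : T → V) hab : (↑(eW.symm a) : V) = ↑(eW.symm b)))
        · exact absurd ((congrArg Subtype.val hab : (↑(eW.symm a) : V) = ↑(fH.symm y)) ▸ hφW a) (fun h => hWS _ h (hφS y))
        · exact absurd ((congrArg Subtype.val hab : (↑(fH.symm x) : V) = ↑(eW.symm b)) ▸ hφS x) (fun h => hWS _ (hφW b) h)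
        · rw [Sum.inr.injEq]
          exact fH.symm.injective (Subtype.val_injective (congrArg (Subtype.val : T → V) hab : (↑(fH.symm x) : V) = ↑(fH.symm y)))
      · rintro ⟨t, (htS | htW)⟩
        · refine ⟨Sum.inr (fH ⟨t, htS⟩), ?_⟩
          simp [hφ]
        · refine ⟨Sum.inl (eW ⟨t, htW⟩), ?_⟩
          simp [hφ]
    set e := Equiv.ofBijective φ hbij with he
    have hval : ∀ z, (↑(e z) : V) = ↑(φ z) := fun z => rfl
    -- adjacency characterization for H and G
    have hadjiff : ∀ (K : SimpleGraph V), K ≤ G →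
        (∀ u v : V, u ∈ S → v ∈ S → (K.Adj u v ↔ H.Adj u v)) →
        ∀ z w : Fin p ⊕ Fin q × Fin 2,
        ((K.induce T).Adj (e z) (e w) ↔ (pK1qK2 p q).Adj z w) := by
      intro K hKG hKS z w
      rw [comap_adj]
      rcases z with a | x <;> rcases w with b | y
      · constructor
        · intro h
          exact absurd (hKG h) (hWind _ (hφW a) _ (hφW b))
        · intro h; exact absurd h (pk_adj_inl _ _)
      · constructor
        · intro h
          exact absurd (hKG h) (hWnS _ (hφW a) _ (hφS y))
        · intro h; exact absurd h (pk_adj_inl _ _)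
      · constructor
        · intro h
          exact absurd (hKG h).symm (hWnS _ (hφW b) _ (hφS x))
        · intro h; exact absurd h.symm (pk_adj_inl _ _)
      · show K.Adj ↑(fH.symm x) ↑(fH.symm y) ↔ _
        rw [hKS _ _ (hφS x) (hφS y), pk_adj_inr]
        exact (comap_adj.symm.trans fH.symm.map_rel_iff : H.Adj ↑(fH.symm x) ↑(fH.symm y) ↔ _)
    have isoH : pK1qK2 p q ≃g H.induce T :=
      ⟨e, by intro z w; exact hadjiff H hH (fun u v _ _ => Iff.rfl) z w⟩
    have isoG : pK1qK2 p q ≃g G.induce T :=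
      ⟨e, by intro z w; exact hadjiff G le_rfl hpt z w⟩
    exact hcl T ⟨isoH.symm⟩ ⟨isoG.symm⟩
  · -- qK2-closure → pK1qK2-closure
    intro hcl S hHS hGS
    obtain ⟨fH⟩ := hHS
    obtain ⟨fG⟩ := hGS
    have heq : H.induce S = G.induce S := le_iso_eq (hindmono S) ⟨fH⟩ ⟨fG⟩
    have hpt : ∀ u v : V, u ∈ S → v ∈ S → (G.Adj u v ↔ H.Adj u v) := by
      intro u v hu hv
      have := SimpleGraph.ext_iff.mp heq
      have h2 := congrFun (congrFun this (⟨u, hu⟩ : S)) (⟨v, hv⟩ : S)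
      constructor
      · intro h; exact (h2 ▸ (comap_adj.mpr h : (G.induce S).Adj ⟨u,hu⟩ ⟨v,hv⟩) : (H.induce S).Adj ⟨u,hu⟩ ⟨v,hv⟩)
      · intro h; exact hH h
    set S' : Set V := {v | ∃ x : Fin q × Fin 2, ↑(fH.symm (Sum.inr x)) = v} with hS'
    set φ : Fin q × Fin 2 → ↥S' := fun x => ⟨↑(fH.symm (Sum.inr x)), ⟨x, rfl⟩⟩ with hφ
    have hφS : ∀ x, (↑(fH.symm (Sum.inr x)) : V) ∈ S := fun x => (fH.symm (Sum.inr x)).2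
    have hbij : Function.Bijective φ := by
      constructor
      · intro x y hxy
        simp only [hφ, Subtype.mk.injEq] at hxy
        have := fH.symm.injective (Subtype.val_injective hxy)
        exact Sum.inr.injEq .. ▸ this
      · rintro ⟨v, x, hx⟩
        exact ⟨x, Subtype.ext hx⟩
    set e := Equiv.ofBijective φ hbij with he
    have hadjiff : ∀ (K : SimpleGraph V), K ≤ G →
        (∀ u v : V, u ∈ S → v ∈ S → (K.Adj u v ↔ H.Adj u v)) →
        ∀ x y : Fin q × Fin 2,
        ((K.induce S').Adj (e x) (e y) ↔ (qK2graph q).Adj x y) := by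
      intro K hKG hKS x y
      rw [comap_adj]
      show K.Adj ↑(fH.symm (Sum.inr x)) ↑(fH.symm (Sum.inr y)) ↔ _
      rw [hKS _ _ (hφS x) (hφS y), ← pk_adj_inr (p := p)]
      exact (comap_adj.symm.trans fH.symm.map_rel_iff :
        H.Adj ↑(fH.symm (Sum.inr x)) ↑(fH.symm (Sum.inr y)) ↔ _)
    have isoH : qK2graph q ≃g H.induce S' :=
      ⟨e, by intro x y; exact hadjiff H hH (fun u v _ _ => Iff.rfl) x y⟩
    have isoG : qK2graph q ≃g G.induce S' :=
      ⟨e, by intro x y; exact hadjiff G le_rfl hpt x y⟩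
    exact hcl S' ⟨isoH.symm⟩ ⟨isoG.symm⟩
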